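/- Assume the structure constants are nonnegative. Then for every t ≥ 1 and every z ∈ ℝ_+^n × ℝ_+^ν one has ϖ(W^t(z)) ≤ (1/4^{2^t − 1}) · (max_{i,p} σ_{ip})^{2^t − 1} · ϖ(z)^{2^t}. -/
import Mathlib


open Filter

/-- The gonosomic evolution operator `W` on `ℝ^n × ℝ^ν` associated with structure constants
`γ_{ipk}` and `γ̃_{ipr}`: it maps `((x_i), (y_p))` to `((x'_k), (y'_r))` with
`x'_k = Σ_{i,p} γ_{ipk} x_i y_p` and `y'_r = Σ_{i,p} γ̃_{ipr} x_i y_p`. -/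
noncomputable def W {n ν : ℕ} (γ : Fin n → Fin ν → Fin n → ℝ)
    (γ' : Fin n → Fin ν → Fin ν → ℝ)
    (z : (Fin n → ℝ) × (Fin ν → ℝ)) : (Fin n → ℝ) × (Fin ν → ℝ) :=
  (fun k => ∑ i, ∑ p, γ i p k * z.1 i * z.2 p,
   fun r => ∑ i, ∑ p, γ' i p r * z.1 i * z.2 p)

/-- The linear form `ϖ(z) = Σ_i x_i + Σ_p y_p` on `ℝ^n × ℝ^ν`. -/
noncomputable def piW {n ν : ℕ} (z : (Fin n → ℝ) × (Fin ν → ℝ)) : ℝ :=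
  ∑ i, z.1 i + ∑ p, z.2 p

/-- `γ_{ip} = Σ_k γ_{ipk}`. -/
noncomputable def gA {n ν : ℕ} (γ : Fin n → Fin ν → Fin n → ℝ)
    (i : Fin n) (p : Fin ν) : ℝ := ∑ k, γ i p k

/-- `γ̃_{ip} = Σ_r γ̃_{ipr}`. -/
noncomputable def gB {n ν : ℕ} (γ' : Fin n → Fin ν → Fin ν → ℝ)
    (i : Fin n) (p : Fin ν) : ℝ := ∑ r, γ' i p r

/-- `σ_{ip} = γ_{ip} + γ̃_{ip}`. -/
noncomputable def σc {n ν : ℕ} (γ : Fin n → Fin ν → Fin n → ℝ)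
    (γ' : Fin n → Fin ν → Fin ν → ℝ) (i : Fin n) (p : Fin ν) : ℝ :=
  gA γ i p + gB γ' i p

/-- The set `O^{n,ν}` of nonnegative points `((x_i),(y_p))` with `x_i y_p = 0` for every
pair `(i,p)` with `σ_{ip} ≠ 0`. -/
def Oset {n ν : ℕ} (γ : Fin n → Fin ν → Fin n → ℝ)
    (γ' : Fin n → Fin ν → Fin ν → ℝ) : Set ((Fin n → ℝ) × (Fin ν → ℝ)) :=
  {z | (∀ i, 0 ≤ z.1 i) ∧ (∀ p, 0 ≤ z.2 p) ∧
    ∀ i p, σc γ γ' i p ≠ 0 → z.1 i * z.2 p = 0}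

/-- The set `S^{n,ν} = S^{n+ν-1} \ O^{n,ν}`, where `S^{n+ν-1}` is the simplex of nonnegative
points with `ϖ(z) = 1`. -/
def Sset {n ν : ℕ} (γ : Fin n → Fin ν → Fin n → ℝ)
    (γ' : Fin n → Fin ν → Fin ν → ℝ) : Set ((Fin n → ℝ) × (Fin ν → ℝ)) :=
  {z | (∀ i, 0 ≤ z.1 i) ∧ (∀ p, 0 ≤ z.2 p) ∧ piW z = 1} \ Oset γ γ'

/-- The normalized gonosomic operator `V(z) = (1/ϖ(W z)) • W z` (junk value when
`ϖ(W z) = 0`, since in `ℝ` we have `0⁻¹ = 0`). -/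
noncomputable def V {n ν : ℕ} (γ : Fin n → Fin ν → Fin n → ℝ)
    (γ' : Fin n → Fin ν → Fin ν → ℝ)
    (z : (Fin n → ℝ) × (Fin ν → ℝ)) : (Fin n → ℝ) × (Fin ν → ℝ) :=
  (piW (W γ γ' z))⁻¹ • W γ γ' z

/-- If the structure constants are nonnegative, then for every `t ≥ 1` and
every nonnegative `z` one has
`ϖ(W^t z) ≤ (1/4^(2^t - 1)) * (max_{i,p} σ_{ip})^(2^t - 1) * ϖ(z)^(2^t)`. -/
lemma sum_swap_aux {n ν m : ℕ} (c : Fin n → Fin ν → Fin m → ℝ)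
    (z : (Fin n → ℝ) × (Fin ν → ℝ)) :
    ∑ k : Fin m, ∑ i, ∑ p, c i p k * z.1 i * z.2 p
      = ∑ i, ∑ p, (∑ k, c i p k) * (z.1 i * z.2 p) := by
  rw [Finset.sum_comm]
  refine Finset.sum_congr rfl fun i _ => ?_
  rw [Finset.sum_comm]
  refine Finset.sum_congr rfl fun p _ => ?_
  rw [Finset.sum_mul]
  refine Finset.sum_congr rfl fun k _ => by ring

lemma piW_W_eq {n ν : ℕ} (γ : Fin n → Fin ν → Fin n → ℝ)
    (γ' : Fin n → Fin ν → Fin ν → ℝ) (z : (Fin n → ℝ) × (Fin ν → ℝ)) :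
    piW (W γ γ' z) = ∑ i, ∑ p, σc γ γ' i p * (z.1 i * z.2 p) := by
  simp only [piW, W, σc, gA, gB, sum_swap_aux, add_mul, Finset.sum_add_distrib]

lemma key_step {n ν : ℕ}
    (γ : Fin n → Fin ν → Fin n → ℝ) (γ' : Fin n → Fin ν → Fin ν → ℝ)
    (hγ : ∀ i p k, 0 ≤ γ i p k) (hγ' : ∀ i p r, 0 ≤ γ' i p r)
    (M : ℝ) (hM0 : 0 ≤ M)
    (hMub : ∀ i p, σc γ γ' i p ≤ M)
    (z : (Fin n → ℝ) × (Fin ν → ℝ)) (hz1 : ∀ i, 0 ≤ z.1 i) (hz2 : ∀ p, 0 ≤ z.2 p) :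
    piW (W γ γ' z) ≤ M / 4 * piW z ^ 2 := by
  have h1 : piW (W γ γ' z) ≤ M * ((∑ i, z.1 i) * (∑ p, z.2 p)) := by
    rw [piW_W_eq]
    have hs : (∑ i, z.1 i) * (∑ p, z.2 p) = ∑ i, ∑ p, z.1 i * z.2 p := by
      rw [Finset.sum_mul_sum]
    rw [hs, Finset.mul_sum]
    refine Finset.sum_le_sum fun i _ => ?_
    rw [Finset.mul_sum]
    refine Finset.sum_le_sum fun p _ => ?_
    exact mul_le_mul_of_nonneg_right (hMub i p) (mul_nonneg (hz1 i) (hz2 p))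
  refine h1.trans ?_
  have ha : (0:ℝ) ≤ ∑ i, z.1 i := Finset.sum_nonneg fun i _ => hz1 i
  have hb : (0:ℝ) ≤ ∑ p, z.2 p := Finset.sum_nonneg fun p _ => hz2 p
  have : (∑ i, z.1 i) * (∑ p, z.2 p) ≤ (1/4) * piW z ^ 2 := by
    simp only [piW]; nlinarith [sq_nonneg ((∑ i, z.1 i) - (∑ p, z.2 p))]
  calc M * ((∑ i, z.1 i) * (∑ p, z.2 p)) ≤ M * ((1/4) * piW z ^ 2) :=
        mul_le_mul_of_nonneg_left this hM0
    _ = M / 4 * piW z ^ 2 := by ring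

lemma W_nonneg {n ν : ℕ}
    (γ : Fin n → Fin ν → Fin n → ℝ) (γ' : Fin n → Fin ν → Fin ν → ℝ)
    (hγ : ∀ i p k, 0 ≤ γ i p k) (hγ' : ∀ i p r, 0 ≤ γ' i p r)
    (z : (Fin n → ℝ) × (Fin ν → ℝ)) (hz1 : ∀ i, 0 ≤ z.1 i) (hz2 : ∀ p, 0 ≤ z.2 p) :
    (∀ i, 0 ≤ (W γ γ' z).1 i) ∧ (∀ p, 0 ≤ (W γ γ' z).2 p) := by
  simp only [W]
  constructor
  · intro k
    exact Finset.sum_nonneg fun i _ => Finset.sum_nonneg fun p _ =>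
      mul_nonneg (mul_nonneg (hγ i p k) (hz1 i)) (hz2 p)
  · intro r
    exact Finset.sum_nonneg fun i _ => Finset.sum_nonneg fun p _ =>
      mul_nonneg (mul_nonneg (hγ' i p r) (hz1 i)) (hz2 p)

theorem stmt_10 {n ν : ℕ} (hn : 1 ≤ n) (hν : 1 ≤ ν)
    (γ : Fin n → Fin ν → Fin n → ℝ) (γ' : Fin n → Fin ν → Fin ν → ℝ)
    (hγ : ∀ i p k, 0 ≤ γ i p k) (hγ' : ∀ i p r, 0 ≤ γ' i p r)
    (M : ℝ) (hM : IsGreatest (Set.range fun ip : Fin n × Fin ν => σc γ γ' ip.1 ip.2) M)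
    (t : ℕ) (ht : 1 ≤ t)
    (z : (Fin n → ℝ) × (Fin ν → ℝ)) (hz1 : ∀ i, 0 ≤ z.1 i) (hz2 : ∀ p, 0 ≤ z.2 p) :
    piW ((W γ γ')^[t] z) ≤
      (1 / 4 ^ (2 ^ t - 1)) * M ^ (2 ^ t - 1) * piW z ^ 2 ^ t := by
  have hM0 : 0 ≤ M := by
    obtain ⟨⟨i, p⟩, hip⟩ := hM.1
    have : 0 ≤ σc γ γ' i p := by
      refine add_nonneg (Finset.sum_nonneg fun k _ => hγ i p k)
        (Finset.sum_nonneg fun r _ => hγ' i p r)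
    simpa [hip] using this
  have hMub : ∀ i p, σc γ γ' i p ≤ M := fun i p => hM.2 ⟨(i, p), rfl⟩
  have main : ∀ t : ℕ, 1 ≤ t → ∀ z : (Fin n → ℝ) × (Fin ν → ℝ),
      (∀ i, 0 ≤ z.1 i) → (∀ p, 0 ≤ z.2 p) →
      piW ((W γ γ')^[t] z) ≤ (M / 4) ^ (2 ^ t - 1) * piW z ^ 2 ^ t := by
    intro t
    induction t with
    | zero => omega
    | succ t ih =>
      intro _ z hz1 hz2
      rcases Nat.eq_zero_or_pos t with rfl | ht'
      · simpa using key_step γ γ' hγ hγ' M hM0 hMub z hz1 hz2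
      · rw [Function.iterate_succ_apply]
        obtain ⟨hw1, hw2⟩ := W_nonneg γ γ' hγ hγ' z hz1 hz2
        have h1 := ih ht' (W γ γ' z) hw1 hw2
        have h2 := key_step γ γ' hγ hγ' M hM0 hMub z hz1 hz2
        have hwn : 0 ≤ piW (W γ γ' z) :=
          add_nonneg (Finset.sum_nonneg fun i _ => hw1 i)
            (Finset.sum_nonneg fun p _ => hw2 p)
        have hq : 0 ≤ M / 4 := by positivity
        calc piW ((W γ γ')^[t] (W γ γ' z))
            ≤ (M / 4) ^ (2 ^ t - 1) * piW (W γ γ' z) ^ 2 ^ t := h1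
          _ ≤ (M / 4) ^ (2 ^ t - 1) * (M / 4 * piW z ^ 2) ^ 2 ^ t := by
              refine mul_le_mul_of_nonneg_left ?_ (by positivity)
              exact pow_le_pow_left₀ hwn h2 _
          _ = (M / 4) ^ (2 ^ (t + 1) - 1) * piW z ^ 2 ^ (t + 1) := by
              rw [mul_pow, ← pow_mul, ← mul_assoc, ← pow_add]
              have e1 : 2 ^ t - 1 + 2 ^ t = 2 ^ (t + 1) - 1 := by
                have : 1 ≤ 2 ^ t := Nat.one_le_two_pow
                omega
              have e2 : 2 * 2 ^ t = 2 ^ (t + 1) := by ring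
              rw [e1, e2]
  have := main t ht z hz1 hz2
  calc piW ((W γ γ')^[t] z) ≤ (M / 4) ^ (2 ^ t - 1) * piW z ^ 2 ^ t := this
    _ = (1 / 4 ^ (2 ^ t - 1)) * M ^ (2 ^ t - 1) * piW z ^ 2 ^ t := by
        rw [div_pow]; ring
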